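/- Let G be the complete k-uniform hypergraph on [n] with 1 ≤ k ≤ n-1, let (R_e)_{e} be mutually independent random variables indexed by the hyperedges, R_i = (R_e : i ∈ e), and let M be generated from (R_1,...,R_n) and X a random variable such that each user decodes X: X is a deterministic function of (R_i, M) for every i. Then H(X) ≤ (1/(n-k)) · Σ_{i=1}^n H(M | R_i). -/

import Mathlib

set_option linter.unusedSectionVars false
set_option linter.unusedVariables false



/-- Probability that the random variable `X` (on finite outcome space `Ω`
with probability mass function `p`) takes the value `a`. -/
noncomputable def pmass {Ω α : Type*} [Fintype Ω] [DecidableEq α]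
    (p : Ω → ℝ) (X : Ω → α) (a : α) : ℝ :=
  ∑ ω, if X ω = a then p ω else 0

/-- Shannon entropy (in bits) of a finitely valued random variable. -/
noncomputable def ent {Ω α : Type*} [Fintype Ω] [Fintype α] [DecidableEq α]
    (p : Ω → ℝ) (X : Ω → α) : ℝ :=
  ∑ a, -(pmass p X a * Real.logb 2 (pmass p X a))

/-- Conditional Shannon entropy `H(X | Y) = H(X, Y) - H(Y)`. -/
noncomputable def condEnt {Ω α β : Type*} [Fintype Ω] [Fintype α] [Fintype β]
    [DecidableEq α] [DecidableEq β] (p : Ω → ℝ) (X : Ω → α) (Y : Ω → β) : ℝ :=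
  ent p (fun ω => (X ω, Y ω)) - ent p Y

/-- `p` is a probability mass function on `Ω`. -/
def IsProb {Ω : Type*} [Fintype Ω] (p : Ω → ℝ) : Prop :=
  (∀ ω, 0 ≤ p ω) ∧ ∑ ω, p ω = 1

/-- Hyperedges of the complete `k`-uniform hypergraph on `Fin n`. -/
abbrev Edge (n k : ℕ) := {s : Finset (Fin n) // s.card = k}

noncomputable def entF (t : ℝ) : ℝ := -(t * Real.logb 2 t)

@[simp] lemma entF_zero : entF 0 = 0 := by simp [entF]

lemma ent_eq_sum_entF {Ω α : Type*} [Fintype Ω] [Fintype α] [DecidableEq α]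
    (p : Ω → ℝ) (X : Ω → α) : ent p X = ∑ a, entF (pmass p X a) := rfl

section basics
variable {Ω α β γ : Type*} [Fintype Ω] [Fintype α] [Fintype β] [Fintype γ]
  [DecidableEq α] [DecidableEq β] [DecidableEq γ] {p : Ω → ℝ}

lemma pmass_nonneg (hp : ∀ ω, 0 ≤ p ω) (X : Ω → α) (a : α) : 0 ≤ pmass p X a :=
  Finset.sum_nonneg fun ω _ => by split <;> simp [hp ω]

lemma pmass_sum (X : Ω → α) : ∑ a, pmass p X a = ∑ ω, p ω := by
  simp only [pmass]
  rw [Finset.sum_comm]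
  exact Finset.sum_congr rfl fun ω _ => by simp

lemma pmass_sum_one (hp : IsProb p) (X : Ω → α) : ∑ a, pmass p X a = 1 := by
  rw [pmass_sum, hp.2]

/-- marginalization over the first coordinate of a pair -/
lemma pmass_snd (X : Ω → α) (Y : Ω → β) (b : β) :
    pmass p Y b = ∑ a, pmass p (fun ω => (X ω, Y ω)) (a, b) := by
  simp only [pmass]
  rw [Finset.sum_comm]
  refine Finset.sum_congr rfl fun ω _ => ?_
  by_cases h : Y ω = b <;> simp [pmass, h, Prod.ext_iff]

/-- marginalization: drop the middle coordinate of a (nested) triple -/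
lemma pmass_mid (A : Ω → α) (B : Ω → β) (C : Ω → γ) (a : α) (c : γ) :
    pmass p (fun ω => (A ω, C ω)) (a, c)
      = ∑ b, pmass p (fun ω => (A ω, (B ω, C ω))) (a, (b, c)) := by
  simp only [pmass]
  rw [Finset.sum_comm]
  refine Finset.sum_congr rfl fun ω _ => ?_
  by_cases h : A ω = a ∧ C ω = c
  · simp [pmass, h.1, h.2, Prod.ext_iff]
  · rw [if_neg (by simpa [Prod.ext_iff] using h)]
    rw [Finset.sum_eq_zero]
    intro b _
    rw [if_neg (by simp [Prod.ext_iff]; tauto)]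

/-- marginalization: pmass of the last coordinate of a triple -/
lemma pmass_last (A : Ω → α) (B : Ω → β) (C : Ω → γ) (c : γ) :
    pmass p C c = ∑ a, ∑ b, pmass p (fun ω => (A ω, (B ω, C ω))) (a, (b, c)) := by
  rw [pmass_snd A C c]
  exact Finset.sum_congr rfl fun a _ => pmass_mid A B C a c

/-- If `Z = f ∘ Y` almost everywhere then `H(Z,Y) = H(Y)`. -/
lemma ent_pair_left {Y : Ω → α} {Z : Ω → β} (f : α → β)
    (hf : ∀ ω, p ω ≠ 0 → Z ω = f (Y ω)) :
    ent p (fun ω => (Z ω, Y ω)) = ent p Y := by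
  have key : ∀ b a, pmass p (fun ω => (Z ω, Y ω)) (b, a)
      = if b = f a then pmass p Y a else 0 := by
    intro b a
    by_cases hb : b = f a
    · rw [if_pos hb]
      refine Finset.sum_congr rfl fun ω _ => ?_
      by_cases hω : p ω = 0
      · split <;> split <;> simp [hω]
      · beta_reduce
        rw [hf ω hω, hb]
        by_cases hY : Y ω = a
        · simp [hY]
        · simp [hY, Prod.ext_iff]
    · rw [if_neg hb]
      refine Finset.sum_eq_zero fun ω _ => ?_
      by_cases hω : p ω = 0
      · split <;> simp [hω]
      · beta_reduce
        rw [if_neg]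
        rw [hf ω hω]
        simp only [Prod.mk.injEq, not_and]
        intro h1 h2
        exact hb (by rw [h2] at h1; exact h1.symm)
  rw [ent_eq_sum_entF, ent_eq_sum_entF, Fintype.sum_prod_type]
  rw [Finset.sum_comm]
  refine Finset.sum_congr rfl fun a _ => ?_
  rw [Finset.sum_congr rfl fun b _ => by rw [key b a]]
  rw [Finset.sum_congr rfl fun b (_ : b ∈ Finset.univ) => (apply_ite entF (b = f a) _ 0)]
  simp

lemma ent_swap (X : Ω → α) (Y : Ω → β) :
    ent p (fun ω => (X ω, Y ω)) = ent p (fun ω => (Y ω, X ω)) := by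
  rw [ent_eq_sum_entF, ent_eq_sum_entF]
  refine Fintype.sum_equiv (Equiv.prodComm α β) _ _ fun c => ?_
  congr 1
  refine Finset.sum_congr rfl fun ω _ => ?_
  simp [Prod.ext_iff, and_comm]

/-- Workhorse: two mutually (a.e.) determined variables have the same entropy. -/
lemma ent_eq_of_maps {Y : Ω → α} {Z : Ω → β} (f : α → β) (g : β → α)
    (hf : ∀ ω, p ω ≠ 0 → Z ω = f (Y ω)) (hg : ∀ ω, p ω ≠ 0 → Y ω = g (Z ω)) :
    ent p Y = ent p Z := by
  calc ent p Y = ent p (fun ω => (Z ω, Y ω)) := (ent_pair_left f hf).symm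
    _ = ent p (fun ω => (Y ω, Z ω)) := ent_swap Z Y
    _ = ent p Z := ent_pair_left g hg

end basics

section FH
variable {Ω α β γ : Type*} [Fintype Ω] [Fintype α] [Fintype β] [Fintype γ]
  [DecidableEq α] [DecidableEq β] [DecidableEq γ] {p : Ω → ℝ}

lemma ent_eq_nent (X : Ω → α) :
    ent p X = (∑ a, -(pmass p X a * Real.log (pmass p X a))) / Real.log 2 := by
  rw [ent, Finset.sum_div]
  refine Finset.sum_congr rfl fun a _ => ?_
  rw [Real.logb]
  ring

lemma ent_snd_le (hp : IsProb p) (X : Ω → α) (Y : Ω → β) :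
    ent p Y ≤ ent p (fun ω => (X ω, Y ω)) := by
  have hr : ∀ z, 0 ≤ pmass p (fun ω => (X ω, Y ω)) z := pmass_nonneg hp.1 _
  rw [ent_eq_nent, ent_eq_nent]
  have hlog2 : (0:ℝ) < Real.log 2 := Real.log_pos one_lt_two
  gcongr
  rw [Fintype.sum_prod_type, Finset.sum_comm]
  refine Finset.sum_le_sum fun b _ => ?_
  rw [pmass_snd X Y b, Finset.sum_mul, ← Finset.sum_neg_distrib]
  refine Finset.sum_le_sum fun a _ => ?_
  rw [neg_le_neg_iff]
  rcases eq_or_lt_of_le (hr (a, b)) with h0 | h0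
  · rw [← h0]; simp
  · refine mul_le_mul_of_nonneg_left ?_ (le_of_lt h0)
    have hle : pmass p (fun ω => (X ω, Y ω)) (a, b) ≤ ∑ a', pmass p (fun ω => (X ω, Y ω)) (a', b) :=
      Finset.single_le_sum (fun a' _ => hr (a', b)) (Finset.mem_univ a)
    exact Real.log_le_log h0 hle

end FH

section Submod

lemma submod_core {α β γ : Type*} [Fintype α] [Fintype β] [Fintype γ]
    (t : α → β → γ → ℝ) (ht0 : ∀ a b c, 0 ≤ t a b c)
    (hts : ∑ a, ∑ b, ∑ c, t a b c = 1) :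
    (∑ a, ∑ b, ∑ c, -(t a b c * Real.log (t a b c)))
      + (∑ c, -((∑ a, ∑ b, t a b c) * Real.log (∑ a, ∑ b, t a b c)))
    ≤ (∑ a, ∑ c, -((∑ b, t a b c) * Real.log (∑ b, t a b c)))
      + (∑ b, ∑ c, -((∑ a, t a b c) * Real.log (∑ a, t a b c))) := by
  set u : α → γ → ℝ := fun a c => ∑ b, t a b c with hu_def
  set v : β → γ → ℝ := fun b c => ∑ a, t a b c with hv_def
  set q : γ → ℝ := fun c => ∑ a, ∑ b, t a b c with hq_def
  have hu0 : ∀ a c, 0 ≤ u a c := fun a c => Finset.sum_nonneg fun b _ => ht0 a b c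
  have hv0 : ∀ b c, 0 ≤ v b c := fun b c => Finset.sum_nonneg fun a _ => ht0 a b c
  have hq0 : ∀ c, 0 ≤ q c := fun c => Finset.sum_nonneg fun a _ => hu0 a c
  have key : ∀ a b c,
      t a b c * Real.log (u a c) + t a b c * Real.log (v b c)
        - t a b c * Real.log (t a b c) - t a b c * Real.log (q c)
      ≤ u a c * v b c / q c - t a b c := by
    intro a b c
    rcases eq_or_lt_of_le (ht0 a b c) with h0 | h0
    · rw [← h0]
      have : (0:ℝ) ≤ u a c * v b c / q c := by
        have := hu0 a c; have := hv0 b c; have := hq0 c; positivity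
      simpa using this
    · have hu1 : t a b c ≤ u a c :=
        Finset.single_le_sum (fun b' _ => ht0 a b' c) (Finset.mem_univ b)
      have hv1 : t a b c ≤ v b c :=
        Finset.single_le_sum (fun a' _ => ht0 a' b c) (Finset.mem_univ a)
      have hq1 : t a b c ≤ q c :=
        hu1.trans (Finset.single_le_sum (fun a' _ => hu0 a' c) (Finset.mem_univ a))
      have hup : 0 < u a c := lt_of_lt_of_le h0 hu1
      have hvp : 0 < v b c := lt_of_lt_of_le h0 hv1
      have hqp : 0 < q c := lt_of_lt_of_le h0 hq1
      have hlog : Real.log (u a c * v b c / (t a b c * q c))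
          ≤ u a c * v b c / (t a b c * q c) - 1 :=
        Real.log_le_sub_one_of_pos (by positivity)
      have hexp : Real.log (u a c * v b c / (t a b c * q c))
          = Real.log (u a c) + Real.log (v b c) - Real.log (t a b c) - Real.log (q c) := by
        rw [Real.log_div (by positivity) (by positivity), Real.log_mul hup.ne' hvp.ne',
          Real.log_mul h0.ne' hqp.ne']
        ring
      have h2 : t a b c * Real.log (u a c * v b c / (t a b c * q c))
          ≤ t a b c * (u a c * v b c / (t a b c * q c)) - t a b c := by
        have := mul_le_mul_of_nonneg_left hlog h0.le
        linarith [this, mul_sub (t a b c) (u a c * v b c / (t a b c * q c)) 1]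
      have h3 : t a b c * (u a c * v b c / (t a b c * q c)) = u a c * v b c / q c := by
        field_simp
      rw [hexp] at h2
      rw [h3] at h2
      linarith [h2, mul_add (t a b c) (Real.log (u a c)) (Real.log (v b c))]
  have hswap : ∀ c, ∑ b, v b c = q c := fun c => Finset.sum_comm
  have sum3A : ∀ (f : α → β → γ → ℝ), ∑ a, ∑ b, ∑ c, f a b c = ∑ c, ∑ a, ∑ b, f a b c := by
    intro f
    calc ∑ a, ∑ b, ∑ c, f a b c = ∑ a, ∑ c, ∑ b, f a b c :=
          Finset.sum_congr rfl fun a _ => Finset.sum_comm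
      _ = ∑ c, ∑ a, ∑ b, f a b c := Finset.sum_comm
  have sum3B : ∀ (f : α → β → γ → ℝ), ∑ a, ∑ b, ∑ c, f a b c = ∑ b, ∑ c, ∑ a, f a b c := by
    intro f
    calc ∑ a, ∑ b, ∑ c, f a b c = ∑ b, ∑ a, ∑ c, f a b c := Finset.sum_comm
      _ = ∑ b, ∑ c, ∑ a, f a b c := Finset.sum_congr rfl fun b _ => Finset.sum_comm
  have hcsum : ∀ c, ∑ a, ∑ b, u a c * v b c / q c ≤ q c := by
    intro c
    by_cases hqc : q c = 0
    · have hz : ∀ a ∈ Finset.univ, u a c = 0 := by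
        intro a _
        exact (Finset.sum_eq_zero_iff_of_nonneg (fun a' _ => hu0 a' c)).mp hqc a (Finset.mem_univ a)
      rw [hqc]
      refine le_of_eq (Finset.sum_eq_zero fun a _ => Finset.sum_eq_zero fun b _ => ?_)
      rw [hz a (Finset.mem_univ a)]
      simp
    · have : ∀ a, ∑ b, u a c * v b c / q c = u a c := by
        intro a
        rw [← Finset.sum_div, ← Finset.mul_sum, hswap c, mul_div_assoc,
          div_self hqc, mul_one]
      refine le_of_eq ?_
      calc ∑ a, ∑ b, u a c * v b c / q c = ∑ a, u a c :=
            Finset.sum_congr rfl fun a _ => this a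
        _ = q c := rfl
  have hsum_uvq : ∑ a, ∑ b, ∑ c, u a c * v b c / q c ≤ 1 := by
    have e1 : ∑ a, ∑ b, ∑ c, u a c * v b c / q c = ∑ c, ∑ a, ∑ b, u a c * v b c / q c :=
      sum3A _
    rw [e1, ← hts]
    calc ∑ c, ∑ a, ∑ b, u a c * v b c / q c ≤ ∑ c, q c := Finset.sum_le_sum fun c _ => hcsum c
      _ = ∑ a, ∑ b, ∑ c, t a b c := (sum3A t).symm
  have main : ∑ a, ∑ b, ∑ c,
      (t a b c * Real.log (u a c) + t a b c * Real.log (v b c)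
        - t a b c * Real.log (t a b c) - t a b c * Real.log (q c)) ≤ 0 := by
    calc ∑ a, ∑ b, ∑ c, (t a b c * Real.log (u a c) + t a b c * Real.log (v b c)
          - t a b c * Real.log (t a b c) - t a b c * Real.log (q c))
        ≤ ∑ a, ∑ b, ∑ c, (u a c * v b c / q c - t a b c) := by
          refine Finset.sum_le_sum fun a _ => Finset.sum_le_sum fun b _ =>
            Finset.sum_le_sum fun c _ => key a b c
      _ = (∑ a, ∑ b, ∑ c, u a c * v b c / q c) - (∑ a, ∑ b, ∑ c, t a b c) := by
          simp [Finset.sum_sub_distrib]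
      _ ≤ 1 - 1 := by rw [hts]; exact sub_le_sub_right hsum_uvq 1
      _ = 0 := by ring
  have expand : ∑ a, ∑ b, ∑ c,
      (t a b c * Real.log (u a c) + t a b c * Real.log (v b c)
        - t a b c * Real.log (t a b c) - t a b c * Real.log (q c))
      = (∑ a, ∑ b, ∑ c, t a b c * Real.log (u a c))
        + (∑ a, ∑ b, ∑ c, t a b c * Real.log (v b c))
        - (∑ a, ∑ b, ∑ c, t a b c * Real.log (t a b c))
        - (∑ a, ∑ b, ∑ c, t a b c * Real.log (q c)) := by
    simp [Finset.sum_sub_distrib, Finset.sum_add_distrib]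
  have pU : ∑ a, ∑ b, ∑ c, t a b c * Real.log (u a c) = ∑ a, ∑ c, u a c * Real.log (u a c) := by
    refine Finset.sum_congr rfl fun a _ => ?_
    calc ∑ b, ∑ c, t a b c * Real.log (u a c) = ∑ c, ∑ b, t a b c * Real.log (u a c) :=
          Finset.sum_comm
      _ = ∑ c, u a c * Real.log (u a c) :=
          Finset.sum_congr rfl fun c _ => (Finset.sum_mul _ _ _).symm
  have pV : ∑ a, ∑ b, ∑ c, t a b c * Real.log (v b c) = ∑ b, ∑ c, v b c * Real.log (v b c) := by
    rw [sum3B]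
    exact Finset.sum_congr rfl fun b _ => Finset.sum_congr rfl fun c _ =>
      (Finset.sum_mul _ _ _).symm
  have pQ : ∑ a, ∑ b, ∑ c, t a b c * Real.log (q c) = ∑ c, q c * Real.log (q c) := by
    rw [sum3A]
    refine Finset.sum_congr rfl fun c _ => ?_
    rw [Finset.sum_mul]
    exact Finset.sum_congr rfl fun a _ => (Finset.sum_mul _ _ _).symm
  rw [expand, pU, pV, pQ] at main
  have negU : ∑ a, ∑ c, -(u a c * Real.log (u a c)) = -∑ a, ∑ c, u a c * Real.log (u a c) := by
    simp [Finset.sum_neg_distrib]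
  have negV : ∑ b, ∑ c, -(v b c * Real.log (v b c)) = -∑ b, ∑ c, v b c * Real.log (v b c) := by
    simp [Finset.sum_neg_distrib]
  have negQ : ∑ c, -(q c * Real.log (q c)) = -∑ c, q c * Real.log (q c) := by
    simp [Finset.sum_neg_distrib]
  have negT : ∑ a, ∑ b, ∑ c, -(t a b c * Real.log (t a b c))
      = -∑ a, ∑ b, ∑ c, t a b c * Real.log (t a b c) := by
    simp [Finset.sum_neg_distrib]
  rw [negU, negV, negQ, negT]
  linarith

end Submod

section SubmodEnt
variable {Ω α β γ : Type*} [Fintype Ω] [Fintype α] [Fintype β] [Fintype γ]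
  [DecidableEq α] [DecidableEq β] [DecidableEq γ] {p : Ω → ℝ}

lemma ent_submod (hp : IsProb p) (A : Ω → α) (B : Ω → β) (C : Ω → γ) :
    ent p (fun ω => (A ω, (B ω, C ω))) + ent p C
      ≤ ent p (fun ω => (A ω, C ω)) + ent p (fun ω => (B ω, C ω)) := by
  have hlog2 : (0:ℝ) < Real.log 2 := Real.log_pos one_lt_two
  set t : α → β → γ → ℝ :=
    fun a b c => pmass p (fun ω => (A ω, (B ω, C ω))) (a, (b, c)) with ht_def
  have ht0 : ∀ a b c, 0 ≤ t a b c := fun a b c => pmass_nonneg hp.1 _ _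
  have hts : ∑ a, ∑ b, ∑ c, t a b c = 1 := by
    have h := pmass_sum_one hp (fun ω => (A ω, (B ω, C ω)))
    simp only [Fintype.sum_prod_type] at h
    exact h
  have core := submod_core t ht0 hts
  rw [ent_eq_nent, ent_eq_nent, ent_eq_nent, ent_eq_nent, ← add_div, ← add_div]
  apply div_le_div_of_nonneg_right ?_ hlog2.le
  have E_T : ∑ z : α × β × γ, -(pmass p (fun ω => (A ω, (B ω, C ω))) z
        * Real.log (pmass p (fun ω => (A ω, (B ω, C ω))) z))
      = ∑ a, ∑ b, ∑ c, -(t a b c * Real.log (t a b c)) := by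
    simp only [Fintype.sum_prod_type]
    rfl
  have E_Q : ∑ c, -(pmass p C c * Real.log (pmass p C c))
      = ∑ c, -((∑ a, ∑ b, t a b c) * Real.log (∑ a, ∑ b, t a b c)) := by
    refine Finset.sum_congr rfl fun c _ => ?_
    rw [pmass_last A B C c]
  have E_U : ∑ z : α × γ, -(pmass p (fun ω => (A ω, C ω)) z
        * Real.log (pmass p (fun ω => (A ω, C ω)) z))
      = ∑ a, ∑ c, -((∑ b, t a b c) * Real.log (∑ b, t a b c)) := by
    rw [Fintype.sum_prod_type]
    refine Finset.sum_congr rfl fun a _ => Finset.sum_congr rfl fun c _ => ?_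
    rw [pmass_mid A B C a c]
  have E_V : ∑ z : β × γ, -(pmass p (fun ω => (B ω, C ω)) z
        * Real.log (pmass p (fun ω => (B ω, C ω)) z))
      = ∑ b, ∑ c, -((∑ a, t a b c) * Real.log (∑ a, t a b c)) := by
    rw [Fintype.sum_prod_type]
    refine Finset.sum_congr rfl fun b _ => Finset.sum_congr rfl fun c _ => ?_
    rw [pmass_snd A (fun ω => (B ω, C ω)) (b, c)]
  rw [E_T, E_Q, E_U, E_V]
  exact core

end SubmodEnt

section Product
variable {Ω : Type*} [Fintype Ω] {p : Ω → ℝ}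

/-- entropy of a product distribution (pure real computation) -/
lemma prod_entF_sum {κ ρ : Type*} [Fintype κ] [DecidableEq κ] [Fintype ρ] [DecidableEq ρ]
    (q : κ → ρ → ℝ) (h0 : ∀ j a, 0 ≤ q j a) (h1 : ∀ j, ∑ a, q j a = 1) :
    ∑ x : κ → ρ, entF (∏ j, q j (x j)) = ∑ j, ∑ a, entF (q j a) := by
  have step1 : ∀ x : κ → ρ, entF (∏ j, q j (x j))
      = ∑ j, -((∏ l, q l (x l)) * Real.logb 2 (q j (x j))) := by
    intro x
    by_cases hx : ∏ j, q j (x j) = 0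
    · rw [hx, entF_zero]
      rw [Finset.sum_eq_zero]
      · intro j _
        simp
    · have hne : ∀ j, q j (x j) ≠ 0 := fun j hj =>
        hx (Finset.prod_eq_zero (Finset.mem_univ j) hj)
      rw [entF, Real.logb_prod _ _ (fun j _ => hne j), Finset.mul_sum, ← Finset.sum_neg_distrib]
  rw [Finset.sum_congr rfl fun x _ => step1 x, Finset.sum_comm]
  refine Finset.sum_congr rfl fun j _ => ?_
  rw [← Fintype.sum_equiv ((Equiv.funSplitAt j ρ).symm) _
      (fun x : κ → ρ => -((∏ l, q l (x l)) * Real.logb 2 (q j (x j)))) (fun z => rfl)]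
  rw [Fintype.sum_prod_type]
  have inner : ∀ (a : ρ) (r : {l // l ≠ j} → ρ),
      -((∏ l, q l (((Equiv.funSplitAt j ρ).symm (a, r)) l))
          * Real.logb 2 (q j (((Equiv.funSplitAt j ρ).symm (a, r)) j)))
      = -(q j a * Real.logb 2 (q j a)) * ∏ l : {l // l ≠ j}, q l.1 (r l) := by
    intro a r
    have hj : ((Equiv.funSplitAt j ρ).symm (a, r)) j = a := by
      simp [Equiv.funSplitAt_symm_apply]
    have hl : ∀ l : {l // l ≠ j}, ((Equiv.funSplitAt j ρ).symm (a, r)) l.1 = r l := by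
      intro l
      simp [Equiv.funSplitAt_symm_apply, l.2]
    have hprod : ∏ l, q l (((Equiv.funSplitAt j ρ).symm (a, r)) l)
        = q j a * ∏ l : {l // l ≠ j}, q l.1 (r l) := by
      rw [← Finset.mul_prod_erase Finset.univ _ (Finset.mem_univ j), hj]
      congr 1
      rw [Finset.prod_subtype (p := fun l => l ≠ j) (Finset.univ.erase j)
        (fun l => by simp [Finset.mem_erase])
        (fun l => q l (((Equiv.funSplitAt j ρ).symm (a, r)) l))]
      exact Finset.prod_congr rfl fun l _ => by rw [hl l]
    rw [hj, hprod]
    ring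
  rw [Finset.sum_congr rfl fun a (_ : a ∈ Finset.univ) =>
    Finset.sum_congr rfl fun r (_ : r ∈ Finset.univ) => inner a r]
  rw [Finset.sum_congr rfl fun a (_ : a ∈ Finset.univ) => (Finset.mul_sum _ _ _).symm]
  have hone : ∑ r : {l // l ≠ j} → ρ, ∏ l : {l // l ≠ j}, q l.1 (r l) = 1 := by
    rw [← Fintype.prod_sum (fun l : {l // l ≠ j} => fun a => q l.1 a)]
    rw [Finset.prod_congr rfl fun l _ => h1 l.1]
    simp
  rw [Finset.sum_congr rfl fun a (_ : a ∈ Finset.univ) => by rw [hone, mul_one]]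
  exact Finset.sum_congr rfl fun a _ => rfl

end Product

section Tuple
variable {Ω ι ρ : Type*} [Fintype Ω] [Fintype ι] [DecidableEq ι] [Fintype ρ] [DecidableEq ρ]
  {p : Ω → ℝ}

lemma pmass_comp {α β : Type*} [Fintype α] [DecidableEq α] [DecidableEq β]
    (f : α → β) (Z : Ω → α) (b : β) :
    pmass p (fun ω => f (Z ω)) b = ∑ a, if f a = b then pmass p Z a else 0 := by
  simp only [pmass]
  have push : ∀ a : α, (if f a = b then ∑ ω, if Z ω = a then p ω else 0 else 0)
      = ∑ ω, if Z ω = a ∧ f a = b then p ω else 0 := by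
    intro a
    by_cases h : f a = b
    · rw [if_pos h]
      exact Finset.sum_congr rfl fun ω _ => by by_cases hz : Z ω = a <;> simp [hz, h]
    · rw [if_neg h]
      exact (Finset.sum_eq_zero fun ω _ => by rw [if_neg (fun hc => h hc.2)]).symm
  rw [Finset.sum_congr rfl fun a (_ : a ∈ Finset.univ) => push a, Finset.sum_comm]
  refine Finset.sum_congr rfl fun ω _ => ?_
  by_cases h : f (Z ω) = b
  · rw [if_pos h, Finset.sum_eq_single_of_mem (Z ω) (Finset.mem_univ _)]
    · simp [h]
    · intro a _ ha
      rw [if_neg (fun hc => ha hc.1.symm)]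
  · rw [if_neg h, Finset.sum_eq_zero]
    intro a _
    rw [if_neg]
    rintro ⟨rfl, hc⟩
    exact h hc

lemma pmass_restrict (hp : IsProb p) (R : ι → Ω → ρ)
    (hindep : ∀ x : ι → ρ, pmass p (fun ω => fun e => R e ω) x = ∏ e, pmass p (R e) (x e))
    (S : Finset ι) (y : {x // x ∈ S} → ρ) :
    pmass p (fun ω => fun e : {x // x ∈ S} => R e.1 ω) y
      = ∏ e : {x // x ∈ S}, pmass p (R e.1) (y e) := by
  have hform : (fun ω => fun e : {x // x ∈ S} => R e.1 ω)
      = fun ω => (fun z : ι → ρ => fun e : {x // x ∈ S} => z e.1) (fun e => R e ω) := rfl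
  rw [hform, pmass_comp (fun z : ι → ρ => fun e : {x // x ∈ S} => z e.1)
    (fun ω => fun e => R e ω) y]
  rw [Finset.sum_congr rfl fun z (_ : z ∈ Finset.univ) => by rw [hindep z]]
  rw [← Fintype.sum_equiv ((Equiv.piEquivPiSubtypeProd (· ∈ S) (fun _ => ρ)).symm) _
      (fun z : ι → ρ => if (fun e : {x // x ∈ S} => z e.1) = y then ∏ e, pmass p (R e) (z e) else 0)
      (fun z => rfl)]
  rw [Fintype.sum_prod_type]
  have key : ∀ (z1 : {x // x ∈ S} → ρ) (z2 : {x // ¬ x ∈ S} → ρ),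
      (if (fun e : {x // x ∈ S} =>
            ((Equiv.piEquivPiSubtypeProd (· ∈ S) (fun _ => ρ)).symm (z1, z2)) e.1) = y then
        ∏ e, pmass p (R e) (((Equiv.piEquivPiSubtypeProd (· ∈ S) (fun _ => ρ)).symm (z1, z2)) e)
      else 0)
      = (if z1 = y then ∏ e : {x // x ∈ S}, pmass p (R e.1) (z1 e) else 0)
          * ∏ e : {x // ¬ x ∈ S}, pmass p (R e.1) (z2 e) := by
    intro z1 z2
    have hz1 : ∀ e : {x // x ∈ S},
        ((Equiv.piEquivPiSubtypeProd (· ∈ S) (fun _ => ρ)).symm (z1, z2)) e.1 = z1 e := by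
      intro e
      simp [Equiv.piEquivPiSubtypeProd_symm_apply, e.2]
    have hz2 : ∀ e : {x // ¬ x ∈ S},
        ((Equiv.piEquivPiSubtypeProd (· ∈ S) (fun _ => ρ)).symm (z1, z2)) e.1 = z2 e := by
      intro e
      simp [Equiv.piEquivPiSubtypeProd_symm_apply, e.2]
    have hres : (fun e : {x // x ∈ S} =>
        ((Equiv.piEquivPiSubtypeProd (· ∈ S) (fun _ => ρ)).symm (z1, z2)) e.1) = z1 :=
      funext hz1
    rw [hres]
    have hprod : ∏ e, pmass p (R e) (((Equiv.piEquivPiSubtypeProd (· ∈ S) (fun _ => ρ)).symm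
        (z1, z2)) e)
        = (∏ e : {x // x ∈ S}, pmass p (R e.1) (z1 e))
          * ∏ e : {x // ¬ x ∈ S}, pmass p (R e.1) (z2 e) := by
      rw [← Fintype.prod_subtype_mul_prod_subtype (· ∈ S)
        (fun e => pmass p (R e) (((Equiv.piEquivPiSubtypeProd (· ∈ S) (fun _ => ρ)).symm
          (z1, z2)) e))]
      congr 1
      · exact Finset.prod_congr (Finset.ext fun x => by simp) fun e _ => by rw [hz1 e]
      · exact Finset.prod_congr (Finset.ext fun x => by simp) fun e _ => by rw [hz2 e]
    rw [hprod]
    split <;> simp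
  rw [Finset.sum_congr rfl fun z1 (_ : z1 ∈ Finset.univ) =>
    Finset.sum_congr rfl fun z2 (_ : z2 ∈ Finset.univ) => key z1 z2]
  rw [Finset.sum_congr rfl fun z1 (_ : z1 ∈ Finset.univ) => (Finset.mul_sum _ _ _).symm]
  have hone : ∑ z2 : {x // ¬ x ∈ S} → ρ, ∏ e : {x // ¬ x ∈ S}, pmass p (R e.1) (z2 e) = 1 := by
    rw [← Fintype.prod_sum (fun e : {x // ¬ x ∈ S} => fun a => pmass p (R e.1) a)]
    rw [Finset.prod_congr rfl fun e _ => pmass_sum_one hp (R e.1)]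
    simp
  rw [Finset.sum_congr rfl fun z1 (_ : z1 ∈ Finset.univ) => by rw [hone, mul_one]]
  rw [Finset.sum_ite_eq' Finset.univ y (fun z1 => ∏ e : {x // x ∈ S}, pmass p (R e.1) (z1 e))]
  simp

lemma ent_tuple (hp : IsProb p) (R : ι → Ω → ρ)
    (hindep : ∀ x : ι → ρ, pmass p (fun ω => fun e => R e ω) x = ∏ e, pmass p (R e) (x e))
    (S : Finset ι) :
    ent p (fun ω => fun e : {x // x ∈ S} => R e.1 ω) = ∑ e ∈ S, ent p (R e) := by
  rw [ent_eq_sum_entF]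
  rw [Finset.sum_congr rfl fun y (_ : y ∈ Finset.univ) => by
    rw [pmass_restrict hp R hindep S y]]
  rw [prod_entF_sum (fun e : {x // x ∈ S} => fun a => pmass p (R e.1) a)
    (fun e a => pmass_nonneg hp.1 _ _) (fun e => pmass_sum_one hp _)]
  rw [← Finset.sum_coe_sort S (fun e => ent p (R e))]
  exact Finset.sum_congr rfl fun e _ => (ent_eq_sum_entF p (R e.1)).symm

end Tuple

section Jent
variable {Ω ι ρ χ : Type*} [Fintype Ω] [Fintype ι] [DecidableEq ι] [Fintype ρ]
  [DecidableEq ρ] [Fintype χ] [DecidableEq χ] {p : Ω → ℝ}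

/-- joint entropy of the variables indexed by `S`, together with `X` -/
noncomputable def Jent (p : Ω → ℝ) (R : ι → Ω → ρ) (X : Ω → χ) (S : Finset ι) : ℝ :=
  ent p (fun ω => ((fun e : {x // x ∈ S} => R e.1 ω), X ω))

lemma Jent_empty (R : ι → Ω → ρ) (X : Ω → χ) : Jent p R X ∅ = ent p X := by
  refine ent_eq_of_maps Prod.snd
    (fun x => ((fun e : {x // x ∈ (∅ : Finset ι)} => (Finset.notMem_empty e.1 e.2).elim), x))
    (fun ω _ => rfl) (fun ω _ => ?_)
  refine Prod.ext ?_ rfl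
  funext e
  exact absurd e.2 (Finset.notMem_empty e.1)

lemma ent_BC (R : ι → Ω → ρ) (X : Ω → χ) {T S : Finset ι} (hTS : T ⊆ S) :
    ent p (fun ω => ((fun e : {x // x ∈ S \ T} => R e.1 ω),
        ((fun e : {x // x ∈ T} => R e.1 ω), X ω)))
      = Jent p R X S := by
  refine ent_eq_of_maps
    (fun z : ({x // x ∈ S \ T} → ρ) × (({x // x ∈ T} → ρ) × χ) =>
      ((fun e : {x // x ∈ S} => if h1 : e.1 ∈ T then z.2.1 ⟨e.1, h1⟩
        else z.1 ⟨e.1, Finset.mem_sdiff.mpr ⟨e.2, h1⟩⟩), z.2.2))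
    (fun w : ({x // x ∈ S} → ρ) × χ =>
      ((fun e : {x // x ∈ S \ T} => w.1 ⟨e.1, (Finset.mem_sdiff.mp e.2).1⟩),
        ((fun e : {x // x ∈ T} => w.1 ⟨e.1, hTS e.2⟩), w.2)))
    (fun ω _ => ?_) (fun ω _ => rfl)
  refine Prod.ext ?_ rfl
  funext e
  by_cases h1 : e.1 ∈ T <;> simp [h1]

lemma ent_AC (R : ι → Ω → ρ) (X : Ω → χ) (T : Finset ι) (u : ι) :
    ent p (fun ω => (R u ω, ((fun e : {x // x ∈ T} => R e.1 ω), X ω)))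
      = Jent p R X (insert u T) := by
  refine ent_eq_of_maps
    (fun z : ρ × (({x // x ∈ T} → ρ) × χ) =>
      ((fun e : {x // x ∈ insert u T} => if h1 : e.1 ∈ T then z.2.1 ⟨e.1, h1⟩ else z.1), z.2.2))
    (fun w : ({x // x ∈ insert u T} → ρ) × χ =>
      (w.1 ⟨u, Finset.mem_insert_self u T⟩,
        ((fun e : {x // x ∈ T} => w.1 ⟨e.1, Finset.mem_insert_of_mem e.2⟩), w.2)))
    (fun ω _ => ?_) (fun ω _ => rfl)
  refine Prod.ext ?_ rfl
  funext e
  by_cases h1 : e.1 ∈ T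
  · simp [h1]
  · rcases Finset.mem_insert.mp e.2 with h | h
    · simp [h1, h]
    · exact absurd h h1

lemma ent_ABC (R : ι → Ω → ρ) (X : Ω → χ) {T S : Finset ι} (hTS : T ⊆ S) (u : ι) :
    ent p (fun ω => (R u ω, ((fun e : {x // x ∈ S \ T} => R e.1 ω),
        ((fun e : {x // x ∈ T} => R e.1 ω), X ω))))
      = Jent p R X (insert u S) := by
  refine ent_eq_of_maps
    (fun z : ρ × (({x // x ∈ S \ T} → ρ) × (({x // x ∈ T} → ρ) × χ)) =>
      ((fun e : {x // x ∈ insert u S} => if h1 : e.1 ∈ T then z.2.2.1 ⟨e.1, h1⟩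
        else if h2 : e.1 ∈ S \ T then z.2.1 ⟨e.1, h2⟩ else z.1), z.2.2.2))
    (fun w : ({x // x ∈ insert u S} → ρ) × χ =>
      (w.1 ⟨u, Finset.mem_insert_self u S⟩,
        ((fun e : {x // x ∈ S \ T} =>
            w.1 ⟨e.1, Finset.mem_insert_of_mem (Finset.mem_sdiff.mp e.2).1⟩),
          ((fun e : {x // x ∈ T} => w.1 ⟨e.1, Finset.mem_insert_of_mem (hTS e.2)⟩), w.2))))
    (fun ω _ => ?_) (fun ω _ => rfl)
  refine Prod.ext ?_ rfl
  funext e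
  by_cases h1 : e.1 ∈ T
  · simp [h1]
  · by_cases h2 : e.1 ∈ S \ T
    · simp [h1, h2]
    · rcases Finset.mem_insert.mp e.2 with h | h
      · simp [h1, h2, h]
      · exact absurd (Finset.mem_sdiff.mpr ⟨h, h1⟩) h2

lemma Jent_mono (hp : IsProb p) (R : ι → Ω → ρ) (X : Ω → χ) {T S : Finset ι} (hTS : T ⊆ S) :
    Jent p R X T ≤ Jent p R X S := by
  rw [← ent_BC R X hTS]
  exact ent_snd_le hp _ _

lemma Jent_insert_le (hp : IsProb p) (R : ι → Ω → ρ) (X : Ω → χ) {T S : Finset ι}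
    (hTS : T ⊆ S) (u : ι) :
    Jent p R X (insert u S) - Jent p R X S ≤ Jent p R X (insert u T) - Jent p R X T := by
  have h := ent_submod hp (fun ω => R u ω) (fun ω => fun e : {x // x ∈ S \ T} => R e.1 ω)
    (fun ω => ((fun e : {x // x ∈ T} => R e.1 ω), X ω))
  rw [ent_ABC R X hTS u, ent_AC R X T u, ent_BC R X hTS] at h
  have hJT : ent p (fun ω => ((fun e : {x // x ∈ T} => R e.1 ω), X ω)) = Jent p R X T := rfl
  rw [hJT] at h
  linarith

end Jent

section Shearer
variable {Ω ι ρ χ ν : Type*} [Fintype Ω] [Fintype ι] [DecidableEq ι] [Fintype ρ]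
  [DecidableEq ρ] [Fintype χ] [DecidableEq χ] [Fintype ν] {p : Ω → ℝ}

lemma shearer (hp : IsProb p) (R : ι → Ω → ρ) (X : Ω → χ) (t : ℕ)
    (U : Finset ι) (fam : ν → Finset ι) (hsub : ∀ j, fam j ⊆ U)
    (hcov : ∀ e ∈ U, t ≤ (Finset.univ.filter (fun j => e ∈ fam j)).card) :
    (t : ℝ) * (Jent p R X U - ent p X) ≤ ∑ j, (Jent p R X (fam j) - ent p X) := by
  induction U using Finset.induction_on generalizing fam with
  | empty =>
    have hfe : ∀ j, fam j = ∅ := fun j => Finset.subset_empty.mp (hsub j)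
    rw [Jent_empty]
    rw [Finset.sum_congr rfl fun j (_ : j ∈ Finset.univ) => by rw [hfe j, Jent_empty]]
    simp
  | @insert u U' hu ih =>
    set fam' : ν → Finset ι := fun j => (fam j).erase u with hfam'
    have hsub' : ∀ j, fam' j ⊆ U' := by
      intro j x hx
      have hxU := hsub j (Finset.erase_subset u (fam j) hx)
      rcases Finset.mem_insert.mp hxU with h | h
      · exact absurd h (Finset.ne_of_mem_erase hx)
      · exact h
    have hcov' : ∀ e ∈ U', t ≤ (Finset.univ.filter (fun j => e ∈ fam' j)).card := by
      intro e he
      have hne : e ≠ u := fun h => hu (h ▸ he)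
      have hfilter : (Finset.univ.filter fun j => e ∈ fam' j)
          = (Finset.univ.filter fun j => e ∈ fam j) := by
        refine Finset.filter_congr fun j _ => ?_
        simp [hfam', Finset.mem_erase, hne]
      rw [hfilter]
      exact hcov e (Finset.mem_insert_of_mem he)
    have ihh := ih fam' hsub' hcov'
    have Δnn : 0 ≤ Jent p R X (insert u U') - Jent p R X U' :=
      sub_nonneg.mpr (Jent_mono hp R X (Finset.subset_insert u U'))
    have step : ∀ j, Jent p R X (fam' j)
        + (if u ∈ fam j then Jent p R X (insert u U') - Jent p R X U' else 0)
        ≤ Jent p R X (fam j) := by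
      intro j
      by_cases hj : u ∈ fam j
      · rw [if_pos hj]
        have hins : insert u (fam' j) = fam j := Finset.insert_erase hj
        have hle := Jent_insert_le hp R X (hsub' j) u
        rw [hins] at hle
        linarith
      · rw [if_neg hj]
        have : fam' j = fam j := Finset.erase_eq_of_notMem hj
        rw [this]
        simp
    have hcount : (t : ℝ) * (Jent p R X (insert u U') - Jent p R X U')
        ≤ ∑ j, (if u ∈ fam j then Jent p R X (insert u U') - Jent p R X U' else 0) := by
      rw [Finset.sum_ite, Finset.sum_const, Finset.sum_const_zero, add_zero, nsmul_eq_mul]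
      refine mul_le_mul_of_nonneg_right ?_ Δnn
      exact_mod_cast hcov u (Finset.mem_insert_self u U')
    have hsum : ∑ j, (Jent p R X (fam' j) - ent p X)
        + ∑ j, (if u ∈ fam j then Jent p R X (insert u U') - Jent p R X U' else 0)
        ≤ ∑ j, (Jent p R X (fam j) - ent p X) := by
      rw [← Finset.sum_add_distrib]
      refine Finset.sum_le_sum fun j _ => ?_
      have := step j
      linarith
    linarith

end Shearer

theorem stmt_18 {Ω ρ μ χ : Type*} [Fintype Ω] [Fintype ρ] [Fintype μ] [Fintype χ]
    [DecidableEq ρ] [DecidableEq μ] [DecidableEq χ]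
    (p : Ω → ℝ) (hp : IsProb p) (n k : ℕ) (hk1 : 1 ≤ k) (hkn : k ≤ n - 1)
    (R : Edge n k → Ω → ρ)
    (hindep : ∀ x : Edge n k → ρ,
      pmass p (fun ω => fun e => R e ω) x = ∏ e, pmass p (R e) (x e))
    (M : Ω → μ)
    (hM : ∃ g : (Edge n k → ρ) → μ, ∀ ω, p ω ≠ 0 → M ω = g (fun e => R e ω))
    (X : Ω → χ)
    (hX : ∀ i : Fin n, ∃ g : ({e : Edge n k // i ∈ e.1} → ρ) → μ → χ,
      ∀ ω, p ω ≠ 0 → X ω = g (fun e => R e.1 ω) (M ω)) :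
    ent p X ≤ (1 / ((n : ℝ) - (k : ℝ))) *
      ∑ i : Fin n, condEnt p M (fun ω => fun e : {e : Edge n k // i ∈ e.1} => R e.1 ω) := by
  obtain ⟨gM, hgM⟩ := hM
  have hn : k + 1 ≤ n := by omega
  have hpos : (0 : ℝ) < (n : ℝ) - (k : ℝ) := by
    have : (k : ℝ) + 1 ≤ (n : ℝ) := by exact_mod_cast hn
    linarith
  set famS : Fin n → Finset (Edge n k) :=
    fun i => Finset.univ.filter (fun e => i ∈ e.1) with hfamS
  -- step (1,2,3) : value of Jent on univ
  have i0 : Fin n := ⟨0, by omega⟩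
  obtain ⟨g0, hg0⟩ := hX i0
  have hfX : ∀ ω, p ω ≠ 0 → X ω =
      (fun r : {x // x ∈ (Finset.univ : Finset (Edge n k))} → ρ =>
        g0 (fun e => r ⟨e.1, Finset.mem_univ e.1⟩) (gM (fun e => r ⟨e, Finset.mem_univ e⟩)))
      (fun e : {x // x ∈ (Finset.univ : Finset (Edge n k))} => R e.1 ω) := by
    intro ω hω
    rw [hg0 ω hω, hgM ω hω]
  have hJu : Jent p R X Finset.univ = ∑ e, ent p (R e) := by
    calc Jent p R X Finset.univ
        = ent p (fun ω => (X ω,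
            (fun e : {x // x ∈ (Finset.univ : Finset (Edge n k))} => R e.1 ω))) :=
          ent_swap _ _
      _ = ent p (fun ω => fun e : {x // x ∈ (Finset.univ : Finset (Edge n k))} => R e.1 ω) :=
          ent_pair_left
            (fun r : {x // x ∈ (Finset.univ : Finset (Edge n k))} → ρ =>
              g0 (fun e => r ⟨e.1, Finset.mem_univ e.1⟩)
                (gM (fun e => r ⟨e, Finset.mem_univ e⟩))) hfX
      _ = ∑ e ∈ Finset.univ, ent p (R e) := ent_tuple hp R hindep Finset.univ
  -- step (4) : per-user lower bound on condEnt
  have h4 : ∀ i : Fin n,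
      Jent p R X (famS i) - ∑ e ∈ famS i, ent p (R e)
        ≤ condEnt p M (fun ω => fun e : {e : Edge n k // i ∈ e.1} => R e.1 ω) := by
    intro i
    obtain ⟨gi, hgi⟩ := hX i
    have e1 : ent p (fun ω => (X ω,
        (M ω, fun e : {e : Edge n k // i ∈ e.1} => R e.1 ω)))
        = ent p (fun ω => (M ω, fun e : {e : Edge n k // i ∈ e.1} => R e.1 ω)) :=
      ent_pair_left (fun z => gi z.2 z.1) (fun ω hω => by rw [hgi ω hω])
    have e2 : ent p (fun ω => (X ω,
        (M ω, fun e : {e : Edge n k // i ∈ e.1} => R e.1 ω)))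
        = ent p (fun ω => (M ω,
            ((fun e : {x // x ∈ famS i} => R e.1 ω), X ω))) := by
      refine ent_eq_of_maps
        (fun z : χ × (μ × ({e : Edge n k // i ∈ e.1} → ρ)) =>
          (z.2.1, ((fun e : {x // x ∈ famS i} =>
            z.2.2 ⟨e.1, (Finset.mem_filter.mp e.2).2⟩), z.1)))
        (fun w : μ × (({x // x ∈ famS i} → ρ) × χ) =>
          (w.2.2, (w.1, (fun e : {e : Edge n k // i ∈ e.1} =>
            w.2.1 ⟨e.1, Finset.mem_filter.mpr ⟨Finset.mem_univ _, e.2⟩⟩))))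
        (fun ω _ => rfl) (fun ω _ => rfl)
    have e3 : Jent p R X (famS i)
        ≤ ent p (fun ω => (M ω, ((fun e : {x // x ∈ famS i} => R e.1 ω), X ω))) :=
      ent_snd_le hp M _
    have e4 : ent p (fun ω => fun e : {e : Edge n k // i ∈ e.1} => R e.1 ω)
        = ∑ e ∈ famS i, ent p (R e) := by
      calc ent p (fun ω => fun e : {e : Edge n k // i ∈ e.1} => R e.1 ω)
          = ent p (fun ω => fun e : {x // x ∈ famS i} => R e.1 ω) := by
            refine ent_eq_of_maps
              (fun r : {e : Edge n k // i ∈ e.1} → ρ =>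
                fun e : {x // x ∈ famS i} => r ⟨e.1, (Finset.mem_filter.mp e.2).2⟩)
              (fun r : {x // x ∈ famS i} → ρ =>
                fun e : {e : Edge n k // i ∈ e.1} =>
                  r ⟨e.1, Finset.mem_filter.mpr ⟨Finset.mem_univ _, e.2⟩⟩)
              (fun ω _ => rfl) (fun ω _ => rfl)
        _ = ∑ e ∈ famS i, ent p (R e) := ent_tuple hp R hindep (famS i)
    have hce : condEnt p M (fun ω => fun e : {e : Edge n k // i ∈ e.1} => R e.1 ω)
        = ent p (fun ω => (M ω, fun e : {e : Edge n k // i ∈ e.1} => R e.1 ω))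
          - ent p (fun ω => fun e : {e : Edge n k // i ∈ e.1} => R e.1 ω) := rfl
    rw [hce, ← e4, ← e1, e2]
    linarith
  -- step (5) : Shearer
  have hcov : ∀ e ∈ (Finset.univ : Finset (Edge n k)), k ≤
      (Finset.univ.filter (fun j : Fin n => e ∈ famS j)).card := by
    intro e _
    have hfe : (Finset.univ.filter (fun j : Fin n => e ∈ famS j)) = e.1 := by
      ext j
      simp [hfamS]
    rw [hfe, e.2]
  have hsh := shearer hp R X k Finset.univ famS (fun j => Finset.subset_univ _) hcov
  -- step (6) : double counting
  have hdc : ∑ i : Fin n, ∑ e ∈ famS i, ent p (R e) = (k : ℝ) * ∑ e, ent p (R e) := by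
    have h1 : ∀ i : Fin n, ∑ e ∈ famS i, ent p (R e)
        = ∑ e : Edge n k, if i ∈ e.1 then ent p (R e) else 0 := by
      intro i
      rw [hfamS]
      beta_reduce
      exact Finset.sum_filter (fun e : Edge n k => i ∈ e.1) (fun e => ent p (R e))
    rw [Finset.sum_congr rfl fun i (_ : i ∈ Finset.univ) => h1 i, Finset.sum_comm]
    have h2 : ∀ e : Edge n k, ∑ i : Fin n, (if i ∈ e.1 then ent p (R e) else 0)
        = (k : ℝ) * ent p (R e) := by
      intro e
      rw [Finset.sum_ite, Finset.sum_const, Finset.sum_const_zero, add_zero, nsmul_eq_mul]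
      congr 2
      have hfe : (Finset.univ.filter (fun i : Fin n => i ∈ e.1)) = e.1 := by
        ext j
        simp
      rw [hfe, e.2]
    rw [Finset.sum_congr rfl fun e (_ : e ∈ Finset.univ) => h2 e, ← Finset.mul_sum]
  -- assemble
  have hsum4 : ∑ i : Fin n, Jent p R X (famS i) - ∑ i : Fin n, ∑ e ∈ famS i, ent p (R e)
      ≤ ∑ i : Fin n, condEnt p M (fun ω => fun e : {e : Edge n k // i ∈ e.1} => R e.1 ω) := by
    rw [← Finset.sum_sub_distrib]
    exact Finset.sum_le_sum fun i _ => h4 i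
  have hsplit : ∑ i : Fin n, (Jent p R X (famS i) - ent p X)
      = ∑ i : Fin n, Jent p R X (famS i) - (n : ℝ) * ent p X := by
    rw [Finset.sum_sub_distrib, Finset.sum_const, Finset.card_univ, Fintype.card_fin,
      nsmul_eq_mul]
  rw [hJu] at hsh
  rw [hsplit] at hsh
  rw [hdc] at hsum4
  have hmain : ((n : ℝ) - (k : ℝ)) * ent p X
      ≤ ∑ i : Fin n, condEnt p M (fun ω => fun e : {e : Edge n k // i ∈ e.1} => R e.1 ω) := by
    nlinarith [hsh, hsum4]
  rw [one_div, inv_mul_eq_div, le_div_iff₀ hpos]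
  linarith [hmain]
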